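/- Let c > 0, π̂ ∈ (0,1), and let f be the solution of the free boundary problem with threshold π* (i.e., f(x) = Ψ(x) + Āx + B̄ on [π̂,π*] with f'(π̂) = 0, f'(π*) = -1, f(π*) = 1-π*, where Ψ(x) = 2c(1-2x)·log(x/(1-x))). Then f(x) ≤ 1 - x for all x ∈ [π̂,1]. -/

import Mathlib

open Real Set

/-- derivative of Ψ on (0,1) -/
lemma psi_hasDeriv (c : ℝ) (Ψ : ℝ → ℝ)
    (hΨ : ∀ x, Ψ x = 2*c*(1-2*x)*Real.log (x/(1-x))) :
    ∀ x ∈ Set.Ioo (0:ℝ) 1, HasDerivAt Ψ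
      (-(4*c)*(Real.log x - Real.log (1-x)) + 2*c*(1-2*x)*(1/x + 1/(1-x))) x := by
  intro x hx
  obtain ⟨hx0, hx1⟩ := hx
  have hx1' : 0 < 1 - x := by linarith
  have h1 : HasDerivAt (fun y : ℝ => 2*c*(1-2*y)) (-(4*c)) x := by
    have : HasDerivAt (fun y : ℝ => 1-2*y) (-2) x := by
      simpa using ((hasDerivAt_id x).const_mul (2:ℝ)).const_sub 1
    have := this.const_mul (2*c)
    exact this.congr_deriv (by ring)
  have h2 : HasDerivAt (fun y : ℝ => Real.log y - Real.log (1-y)) (1/x + 1/(1-x)) x := by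
    have hl : HasDerivAt Real.log (1/x) x := by
      simpa [one_div] using Real.hasDerivAt_log (ne_of_gt hx0)
    have hinner : HasDerivAt (fun y : ℝ => 1-y) (-1) x := by
      simpa using (hasDerivAt_id x).const_sub 1
    have hl2 : HasDerivAt (fun y : ℝ => Real.log (1-y)) (-(1/(1-x))) x := by
      have := (Real.hasDerivAt_log (ne_of_gt hx1')).comp x hinner
      exact this.congr_deriv (by ring)
    exact (hl.sub hl2).congr_deriv (by ring)
  have h3 := h1.mul h2
  have heq : Ψ =ᶠ[nhds x] (fun y => (2*c*(1-2*y)) * (Real.log y - Real.log (1-y))) := by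
    filter_upwards [isOpen_Ioo.mem_nhds ⟨hx0, hx1⟩] with y hy
    rw [hΨ y, Real.log_div (ne_of_gt hy.1) (ne_of_gt (by linarith [hy.2] : (0:ℝ) < 1 - y))]
  refine (h3.congr_of_eventuallyEq heq).congr_deriv ?_
  ring

/-- the derivative function -/
noncomputable def psid (c : ℝ) : ℝ → ℝ :=
  fun x => -(4*c)*(Real.log x - Real.log (1-x)) + 2*c*(1-2*x)*(1/x + 1/(1-x))

lemma psid_hasDeriv (c : ℝ) :
    ∀ x ∈ Set.Ioo (0:ℝ) 1, HasDerivAt (psid c)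
      (-(4*c)*(1/x + 1/(1-x)) + (-(4*c)*(1/x + 1/(1-x)) + 2*c*(1-2*x)*(-(1/x^2) + 1/(1-x)^2))) x := by
  intro x hx
  obtain ⟨hx0, hx1⟩ := hx
  have hx1' : 0 < 1 - x := by linarith
  have h2 : HasDerivAt (fun y : ℝ => Real.log y - Real.log (1-y)) (1/x + 1/(1-x)) x := by
    have hl : HasDerivAt Real.log (1/x) x := by
      simpa [one_div] using Real.hasDerivAt_log (ne_of_gt hx0)
    have hinner : HasDerivAt (fun y : ℝ => 1-y) (-1) x := by
      simpa using (hasDerivAt_id x).const_sub 1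
    have hl2 : HasDerivAt (fun y : ℝ => Real.log (1-y)) (-(1/(1-x))) x := by
      have := (Real.hasDerivAt_log (ne_of_gt hx1')).comp x hinner
      exact this.congr_deriv (by ring)
    exact (hl.sub hl2).congr_deriv (by ring)
  have hA : HasDerivAt (fun y : ℝ => -(4*c)*(Real.log y - Real.log (1-y)))
      (-(4*c)*(1/x + 1/(1-x))) x := h2.const_mul _
  have hinv1 : HasDerivAt (fun y : ℝ => 1/y) (-(1/x^2)) x := by
    simpa [one_div] using hasDerivAt_inv (ne_of_gt hx0)
  have hinner : HasDerivAt (fun y : ℝ => 1-y) (-1) x := by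
    simpa using (hasDerivAt_id x).const_sub 1
  have hinv2 : HasDerivAt (fun y : ℝ => 1/(1-y)) (1/(1-x)^2) x := by
    have := (hasDerivAt_inv (ne_of_gt hx1')).comp x hinner
    rw [show (fun y : ℝ => 1/(1-y)) = (fun y => y⁻¹) ∘ HSub.hSub 1 by funext y; simp [one_div]]
    exact this.congr_deriv (by ring)
  have hsum : HasDerivAt (fun y : ℝ => 1/y + 1/(1-y)) (-(1/x^2) + 1/(1-x)^2) x :=
    hinv1.add hinv2
  have h1 : HasDerivAt (fun y : ℝ => 2*c*(1-2*y)) (-(4*c)) x := by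
    have : HasDerivAt (fun y : ℝ => 1-2*y) (-2) x := by
      simpa using ((hasDerivAt_id x).const_mul (2:ℝ)).const_sub 1
    have := this.const_mul (2*c)
    exact this.congr_deriv (by ring)
  have hB := h1.mul hsum
  have := hA.add hB
  refine this.congr_deriv ?_
  ring

lemma psid_strictAnti (c : ℝ) (hc : 0 < c) : StrictAntiOn (psid c) (Set.Ioo (0:ℝ) 1) := by
  apply strictAntiOn_of_deriv_neg (convex_Ioo 0 1)
  · exact fun x hx => (psid_hasDeriv c x hx).continuousAt.continuousWithinAt
  · intro x hx
    rw [interior_Ioo] at hx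
    rw [(psid_hasDeriv c x hx).deriv]
    obtain ⟨hx0, hx1⟩ := hx
    have hx1' : 0 < 1 - x := by linarith
    have key : -(4*c)*(1/x + 1/(1-x)) + (-(4*c)*(1/x + 1/(1-x)) + 2*c*(1-2*x)*(-(1/x^2) + 1/(1-x)^2))
        = -(8*c/(x*(1-x))) - 2*c*(1-2*x)^2/(x^2*(1-x)^2) := by
      field_simp
      ring
    rw [key]
    have t1 : 0 < 8*c/(x*(1-x)) := by positivity
    have t2 : 0 ≤ 2*c*(1-2*x)^2/(x^2*(1-x)^2) := by positivity
    linarith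

theorem stmt8 (c πh πs A B : ℝ) (hc : 0 < c)
    (h1 : 0 < πh) (h2 : πh < πs) (h3 : πs < 1)
    (Ψ : ℝ → ℝ) (hΨ : ∀ x, Ψ x = 2*c*(1-2*x)*Real.log (x/(1-x)))
    (hA : A = -deriv Ψ πh)
    (hslope : deriv Ψ πs + A = -1)
    (hB : Ψ πs + A*πs + B = 1 - πs)
    (f : ℝ → ℝ)
    (hf : ∀ x, f x = if x ≤ πs then Ψ x + A*x + B else 1 - x) :
    ∀ x ∈ Set.Icc πh 1, f x ≤ 1 - x := by
  have hpsiD := psi_hasDeriv c Ψ hΨ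
  have hπs : πs ∈ Set.Ioo (0:ℝ) 1 := ⟨by linarith, h3⟩
  have hderivπs : deriv Ψ πs = psid c πs := (hpsiD πs hπs).deriv
  have hslope' : psid c πs + A = -1 := by rw [← hderivπs]; exact hslope
  intro x hx
  obtain ⟨hxl, hxu⟩ := hx
  rw [hf x]
  by_cases hcase : x ≤ πs
  · rw [if_pos hcase]
    rcases eq_or_lt_of_le hcase with heq | hlt
    · subst heq; linarith
    · -- x < πs, use MVT on g
      have hx0 : 0 < x := lt_of_lt_of_le h1 hxl
      have hx1 : x < 1 := lt_trans hlt h3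
      set g : ℝ → ℝ := fun y => Ψ y + A*y + B - (1 - y) with hg
      have hgderiv : ∀ y ∈ Set.Ioo (0:ℝ) 1, HasDerivAt g (psid c y + A + 1) y := by
        intro y hy
        have := ((hpsiD y hy).add_const B).add
          (((hasDerivAt_id y).const_mul A).sub ((hasDerivAt_id y).const_sub 1))
        refine (this.congr_of_eventuallyEq ?_).congr_deriv ?_
        · filter_upwards with z; simp [hg, psid]; ring
        · simp [psid]; ring
      have hsub : Set.Icc x πs ⊆ Set.Ioo (0:ℝ) 1 := fun y hy =>
        ⟨lt_of_lt_of_le hx0 hy.1, lt_of_le_of_lt hy.2 h3⟩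
      have hcont : ContinuousOn g (Set.Icc x πs) := fun y hy =>
        (hgderiv y (hsub hy)).continuousAt.continuousWithinAt
      obtain ⟨ξ, hξ, hξeq⟩ := exists_hasDerivAt_eq_slope g (fun y => psid c y + A + 1) hlt hcont
        (fun y hy => hgderiv y (Set.mem_of_mem_of_subset (Set.mem_Icc.mpr ⟨le_of_lt hy.1, le_of_lt hy.2⟩) hsub))
      have hξmem : ξ ∈ Set.Ioo (0:ℝ) 1 := ⟨lt_trans hx0 hξ.1, lt_trans hξ.2 h3⟩
      have hmono : psid c πs < psid c ξ := psid_strictAnti c hc hξmem hπs hξ.2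
      have hgπs : g πs = 0 := by simp [hg]; linarith
      have hpos : 0 < psid c ξ + A + 1 := by linarith
      rw [hξeq, hgπs] at hpos
      have hd : 0 < πs - x := by linarith
      have hgx : g x < 0 := by
        rcases div_pos_iff.mp hpos with ⟨ha, _⟩ | ⟨_, hb⟩
        · linarith
        · linarith
      simp [hg] at hgx
      linarith
  · rw [if_neg hcase]
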